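/- Let h(t) be a one-parameter family of bilinear forms on an n-dimensional real inner product space (V,g), differentiable in t. Then for every 1 ≤ k ≤ n, (d/dt) s_k(h(t)) = ⟨t_{k−1}(h(t)), h′(t)⟩; in particular, for k = n one has Jacobi's formula (d/dt) det(h(t)) = ⟨t_{n−1}(h(t)), h′(t)⟩. -/

import Mathlib

noncomputable section

open Finset

/-- Double forms over an `n`-dimensional real inner product space, described by their
coefficients in a fixed orthonormal basis: a `(p,q)`-double form corresponds to a function
supported on pairs of subsets of cardinalities `p` and `q`. -/
abbrev DForm (n : ℕ) := Finset (Fin n) → Finset (Fin n) → ℝ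

namespace DForm

variable {n : ℕ}

/-- Sign of the shuffle placing the elements of `A` (in increasing order) before
those of `B` (in increasing order). -/
def shuffleSign (A B : Finset (Fin n)) : ℝ :=
  (-1 : ℝ) ^ (∑ x ∈ B, (A.filter fun a => x < a).card)

/-- The exterior product of double forms. -/
def wedge (ω₁ ω₂ : DForm n) : DForm n := fun I J =>
  ∑ A ∈ I.powerset, ∑ B ∈ J.powerset,
    shuffleSign A (I \ A) * shuffleSign B (J \ B) * ω₁ A B * ω₂ (I \ A) (J \ B)

/-- Exterior powers `ω^k` of a double form. -/
def dpow (ω : DForm n) : ℕ → DForm n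
  | 0 => fun I J => if I = ∅ ∧ J = ∅ then 1 else 0
  | k + 1 => wedge ω (dpow ω k)

/-- The double Hodge star operator. -/
def hstar (ω : DForm n) : DForm n := fun I J =>
  shuffleSign Iᶜ I * shuffleSign Jᶜ J * ω Iᶜ Jᶜ

/-- The contraction `c` of double forms. -/
def contr (ω : DForm n) : DForm n := fun I J =>
  ∑ j : Fin n,
    if j ∈ I ∨ j ∈ J then 0
    else shuffleSign {j} I * shuffleSign {j} J * ω (insert j I) (insert j J)

/-- Iterated contraction `c^k`. -/
def citer (ω : DForm n) : ℕ → DForm n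
  | 0 => ω
  | k + 1 => contr (citer ω k)

/-- The inner product of double forms. -/
def dinner (ω₁ ω₂ : DForm n) : ℝ :=
  ∑ I : Finset (Fin n), ∑ J : Finset (Fin n), ω₁ I J * ω₂ I J

/-- The transpose `ω^t` of a double form. -/
def transp (ω : DForm n) : DForm n := fun I J => ω J I

/-- The composition (Greub) product `ω₁ ∘ ω₂` of double forms. -/
def comp (ω₁ ω₂ : DForm n) : DForm n := fun I J =>
  ∑ K : Finset (Fin n), ω₂ I K * ω₁ K J

/-- The scalar value of a `(0,0)`-double form. -/
def toScalar (ω : DForm n) : ℝ := ω ∅ ∅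

/-- The metric, as a `(1,1)`-double form. -/
def gMetric (n : ℕ) : DForm n := fun I J => if I = J ∧ I.card = 1 then 1 else 0

/-- Iterated composition power `ω^{∘r}` of a `(1,1)`-double form, with `ω^{∘0} = g`. -/
def cpow (ω : DForm n) : ℕ → DForm n
  | 0 => gMetric n
  | r + 1 => comp ω (cpow ω r)

/-- The `(1,1)`-double form associated to a bilinear form, given by its matrix in the
orthonormal basis. -/
def ofMatrix (h : Matrix (Fin n) (Fin n) ℝ) : DForm n := fun I J =>
  ∑ i : Fin n, ∑ j : Fin n, if I = {i} ∧ J = {j} then h i j else 0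

/-- `ω` is a `(p,q)`-double form. -/
def IsOfDeg (ω : DForm n) (p q : ℕ) : Prop :=
  ∀ I J : Finset (Fin n), ω I J ≠ 0 → I.card = p ∧ J.card = q

/-- `ω` is a symmetric double form. -/
def IsSym (ω : DForm n) : Prop := ∀ I J, ω I J = ω J I

/-- The sign relating `e_{v 0} ∧ ⋯ ∧ e_{v (p-1)}` to the corresponding increasing
basis `p`-vector (and `0` if the indices are not pairwise distinct). -/
def tupleSign {p : ℕ} (v : Fin p → Fin n) : ℝ :=
  if Function.Injective v then (((Equiv.Perm.sign (Tuple.sort v)) : ℤ) : ℝ) else 0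

/-- Evaluation of a double form on wedges of basis vectors indexed by arbitrary tuples. -/
def evalT (ω : DForm n) {p q : ℕ} (v : Fin p → Fin n) (w : Fin q → Fin n) : ℝ :=
  tupleSign v * tupleSign w * ω (Finset.image v Finset.univ) (Finset.image w Finset.univ)

/-- The first Bianchi identity for a `(2,2)`-double form:
`R(x∧y,z∧t) + R(y∧z,x∧t) + R(z∧x,y∧t) = 0`. -/
def Bianchi2 (R : DForm n) : Prop :=
  ∀ x y z t : Fin n,
    evalT R ![x, y] ![z, t] + evalT R ![y, z] ![x, t] + evalT R ![z, x] ![y, t] = 0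

/-- The first Bianchi identity for a `(p,p)`-double form. -/
def FirstBianchi (ω : DForm n) (p : ℕ) : Prop :=
  ∀ (x : Fin (p + 1) → Fin n) (y : Fin (p - 1) → Fin n),
    ∑ j : Fin (p + 1),
      (-1 : ℝ) ^ (j : ℕ) * evalT ω (x ∘ Fin.succAbove j) (Fin.cons (x j) y) = 0

/-- The characteristic coefficient `s_k(h)` of a bilinear form `h`, defined through the
characteristic polynomial: `det(h - λ g) = ∑ (-1)^(n-i) s_i(h) λ^(n-i)`. -/
def sInv (h : Matrix (Fin n) (Fin n) ℝ) (k : ℕ) : ℝ :=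
  (-1 : ℝ) ^ k * (Matrix.charpoly h).coeff (n - k)

/-- The `k`-th cofactor (Newton) transformation `t_k(h) = (1/(k!(n-1-k)!)) *(g^{n-1-k} h^k)`. -/
def tInv (h : Matrix (Fin n) (Fin n) ℝ) (k : ℕ) : DForm n :=
  ((k.factorial * (n - 1 - k).factorial : ℕ) : ℝ)⁻¹ •
    hstar (wedge (dpow (gMetric n) (n - 1 - k)) (dpow (ofMatrix h) k))

/-- The `(r,q)`-cofactor `s_{(r,q)}(h) = (1/(q!(n-q-r)!)) *(g^{n-q-r} h^q)`. -/
def sCof (h : Matrix (Fin n) (Fin n) ℝ) (r q : ℕ) : DForm n :=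
  ((q.factorial * (n - q - r).factorial : ℕ) : ℝ)⁻¹ •
    hstar (wedge (dpow (gMetric n) (n - q - r)) (dpow (ofMatrix h) q))

end DForm

namespace DForm

open Finset

variable {n : ℕ}

/-- Determinant of the `k×k` minor of `h` with rows `S` and columns `T` (in increasing order). -/
def pdet (k : ℕ) (h : Matrix (Fin n) (Fin n) ℝ) (S T : Finset (Fin n)) : ℝ :=
  if hST : S.card = k ∧ T.card = k then
    Matrix.det (Matrix.of fun a b : Fin k =>
      h (S.orderEmbOfFin hST.1 a) (T.orderEmbOfFin hST.2 b))
  else 0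

lemma pdet_of_card {k : ℕ} (h : Matrix (Fin n) (Fin n) ℝ) {S T : Finset (Fin n)}
    (hS : S.card = k) (hT : T.card = k) :
    pdet k h S T = Matrix.det (Matrix.of fun a b : Fin k =>
      h (S.orderEmbOfFin hS a) (T.orderEmbOfFin hT b)) := by
  rw [pdet, dif_pos ⟨hS, hT⟩]

lemma pdet_eq_zero {k : ℕ} (h : Matrix (Fin n) (Fin n) ℝ) {S T : Finset (Fin n)}
    (hST : ¬(S.card = k ∧ T.card = k)) : pdet k h S T = 0 := by
  rw [pdet, dif_neg hST]

lemma filter_lt_orderEmbOfFin {k : ℕ} (S : Finset (Fin n)) (hS : S.card = k) (r : Fin k) :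
    (S.filter (fun x => x < S.orderEmbOfFin hS r)).card = (r : ℕ) := by
  have himg : S.filter (fun x => x < S.orderEmbOfFin hS r)
      = (Finset.Iio r).image (S.orderEmbOfFin hS) := by
    ext x
    simp only [mem_filter, mem_image, mem_Iio]
    constructor
    · rintro ⟨hxS, hlt⟩
      have : x ∈ Set.range (S.orderEmbOfFin hS) := by
        rw [Finset.range_orderEmbOfFin]; exact Finset.mem_coe.2 hxS
      obtain ⟨j, rfl⟩ := this
      exact ⟨j, (OrderEmbedding.lt_iff_lt _).1 hlt, rfl⟩
    · rintro ⟨j, hj, rfl⟩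
      exact ⟨Finset.orderEmbOfFin_mem _ _ _, (OrderEmbedding.lt_iff_lt _).2 hj⟩
  rw [himg, Finset.card_image_of_injective _ (S.orderEmbOfFin hS).injective, Fin.card_Iio]

lemma card_erase_emb {k : ℕ} (S : Finset (Fin n)) (hS : S.card = k + 1) (r : Fin (k + 1)) :
    (S.erase (S.orderEmbOfFin hS r)).card = k := by
  rw [Finset.card_erase_of_mem (Finset.orderEmbOfFin_mem _ _ _), hS]
  rfl

lemma orderEmbOfFin_erase {k : ℕ} (S : Finset (Fin n)) (hS : S.card = k + 1) (r : Fin (k + 1))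
    (x : Fin k) :
    (S.erase (S.orderEmbOfFin hS r)).orderEmbOfFin (card_erase_emb S hS r) x
      = S.orderEmbOfFin hS (r.succAbove x) := by
  have h1 : ∀ y : Fin k, S.orderEmbOfFin hS (r.succAbove y) ∈ S.erase (S.orderEmbOfFin hS r) := by
    intro y
    refine Finset.mem_erase.2 ⟨?_, Finset.orderEmbOfFin_mem _ _ _⟩
    intro hcontra
    exact Fin.succAbove_ne r y ((S.orderEmbOfFin hS).injective hcontra)
  have h2 : StrictMono (fun y : Fin k => S.orderEmbOfFin hS (r.succAbove y)) :=
    (S.orderEmbOfFin hS).strictMono.comp (Fin.strictMono_succAbove r)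
  have := Finset.orderEmbOfFin_unique (card_erase_emb S hS r) h1 h2
  exact (congrFun this x).symm

/-- Laplace expansion of a minor determinant along the row at position `r`. -/
lemma pdet_laplace {k : ℕ} (h : Matrix (Fin n) (Fin n) ℝ) {S T : Finset (Fin n)}
    (hS : S.card = k + 1) (hT : T.card = k + 1) (r : Fin (k + 1)) :
    pdet (k + 1) h S T = ∑ c : Fin (k + 1),
      (-1 : ℝ) ^ ((r : ℕ) + (c : ℕ)) * h (S.orderEmbOfFin hS r) (T.orderEmbOfFin hT c) *
        pdet k h (S.erase (S.orderEmbOfFin hS r)) (T.erase (T.orderEmbOfFin hT c)) := by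
  rw [pdet_of_card h hS hT, Matrix.det_succ_row _ r]
  refine Finset.sum_congr rfl fun c _ => ?_
  rw [pdet_of_card h (card_erase_emb S hS r) (card_erase_emb T hT c)]
  have hdet : ((Matrix.of fun a b => h (S.orderEmbOfFin hS a) (T.orderEmbOfFin hT b)).submatrix
      r.succAbove c.succAbove)
      = Matrix.of fun a b =>
          h ((S.erase (S.orderEmbOfFin hS r)).orderEmbOfFin (card_erase_emb S hS r) a)
            ((T.erase (T.orderEmbOfFin hT c)).orderEmbOfFin (card_erase_emb T hT c) b) := by
    ext a b
    simp only [Matrix.submatrix_apply, Matrix.of_apply]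
    rw [orderEmbOfFin_erase, orderEmbOfFin_erase]
  rw [hdet]
  rfl

end DForm

namespace DForm

open Finset

variable {n : ℕ}

lemma shuffleSign_singleton (i : Fin n) (B : Finset (Fin n)) :
    shuffleSign {i} B = (-1 : ℝ) ^ (B.filter (fun x => x < i)).card := by
  rw [shuffleSign, Finset.card_filter]
  congr 1
  refine Finset.sum_congr rfl fun x _ => ?_
  by_cases hx : x < i
  · rw [if_pos hx, Finset.filter_singleton, if_pos hx, Finset.card_singleton]
  · rw [if_neg hx, Finset.filter_singleton, if_neg hx, Finset.card_empty]

lemma shuffleSign_sq (A B : Finset (Fin n)) : shuffleSign A B * shuffleSign A B = 1 := by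
  rw [shuffleSign, ← pow_add, ← two_mul, pow_mul]
  norm_num

lemma filter_lt_sdiff (S : Finset (Fin n)) (x : Fin n) :
    ((S \ {x}).filter (fun y => y < x)) = S.filter (fun y => y < x) := by
  ext y
  simp only [Finset.mem_filter, Finset.mem_sdiff, Finset.mem_singleton]
  constructor
  · rintro ⟨⟨hy, _⟩, hlt⟩; exact ⟨hy, hlt⟩
  · rintro ⟨hy, hlt⟩; exact ⟨⟨hy, ne_of_lt hlt⟩, hlt⟩

lemma filter_lt_erase (S : Finset (Fin n)) (x : Fin n) :
    ((S.erase x).filter (fun y => y < x)) = S.filter (fun y => y < x) := by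
  rw [Finset.erase_eq]; exact filter_lt_sdiff S x

lemma shuffleSign_emb {k : ℕ} (S : Finset (Fin n)) (hS : S.card = k) (r : Fin k) :
    shuffleSign {S.orderEmbOfFin hS r} (S \ {S.orderEmbOfFin hS r}) = (-1 : ℝ) ^ (r : ℕ) := by
  rw [shuffleSign_singleton, filter_lt_sdiff, filter_lt_orderEmbOfFin]

lemma sum_emb {k : ℕ} {S : Finset (Fin n)} (hS : S.card = k) (f : Fin n → ℝ) :
    ∑ x ∈ S, f x = ∑ r : Fin k, f (S.orderEmbOfFin hS r) := by
  have himg : Finset.image (S.orderEmbOfFin hS) Finset.univ = S := by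
    apply Finset.coe_injective
    rw [Finset.coe_image, Finset.coe_univ, Set.image_univ, Finset.range_orderEmbOfFin]
  calc ∑ x ∈ S, f x = ∑ x ∈ Finset.image (S.orderEmbOfFin hS) Finset.univ, f x :=
        Finset.sum_congr himg.symm fun _ _ => rfl
    _ = ∑ r : Fin k, f (S.orderEmbOfFin hS r) :=
        Finset.sum_image fun a _ b _ hab => (S.orderEmbOfFin hS).injective hab

lemma ofMatrix_singleton (m : Matrix (Fin n) (Fin n) ℝ) (i j : Fin n) :
    ofMatrix m {i} {j} = m i j := by
  rw [ofMatrix]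
  rw [Finset.sum_eq_single i]
  · rw [Finset.sum_eq_single j]
    · rw [if_pos ⟨rfl, rfl⟩]
    · intro j' _ hj'
      rw [if_neg]
      rintro ⟨-, hj⟩
      exact hj' (Finset.singleton_inj.1 hj).symm
    · intro habs; exact absurd (Finset.mem_univ j) habs
  · intro i' _ hi'
    apply Finset.sum_eq_zero
    intro j' _
    rw [if_neg]
    rintro ⟨hi, -⟩
    exact hi' (Finset.singleton_inj.1 hi).symm
  · intro habs; exact absurd (Finset.mem_univ i) habs

lemma ofMatrix_support {m : Matrix (Fin n) (Fin n) ℝ} {A B : Finset (Fin n)}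
    (h : ofMatrix m A B ≠ 0) : (∃ i, A = {i}) ∧ (∃ j, B = {j}) := by
  by_contra hc
  apply h
  apply Finset.sum_eq_zero; intro i _
  apply Finset.sum_eq_zero; intro j _
  rw [if_neg]
  rintro ⟨hA, hB⟩
  exact hc ⟨⟨i, hA⟩, ⟨j, hB⟩⟩

lemma wedge_ofMatrix (m : Matrix (Fin n) (Fin n) ℝ) (ω : DForm n) (I J : Finset (Fin n)) :
    wedge (ofMatrix m) ω I J = ∑ i ∈ I, ∑ j ∈ J,
      shuffleSign {i} (I \ {i}) * shuffleSign {j} (J \ {j}) * m i j * ω (I \ {i}) (J \ {j}) := by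
  set F : Finset (Fin n) × Finset (Fin n) → ℝ := fun p =>
    shuffleSign p.1 (I \ p.1) * shuffleSign p.2 (J \ p.2) * ofMatrix m p.1 p.2 *
      ω (I \ p.1) (J \ p.2) with hFdef
  set e : Fin n × Fin n → Finset (Fin n) × Finset (Fin n) := fun p => ({p.1}, {p.2}) with he
  have hF : wedge (ofMatrix m) ω I J = ∑ p ∈ I.powerset ×ˢ J.powerset, F p := by
    rw [wedge, Finset.sum_product]
  have hinj : ∀ p ∈ I ×ˢ J, ∀ q ∈ I ×ˢ J, e p = e q → p = q := by
    intro p _ q _ hpq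
    rw [he] at hpq
    have h1 := congrArg Prod.fst hpq
    have h2 := congrArg Prod.snd hpq
    simp only at h1 h2
    exact Prod.ext (Finset.singleton_inj.1 h1) (Finset.singleton_inj.1 h2)
  have hsub : Finset.image e (I ×ˢ J) ⊆ I.powerset ×ˢ J.powerset := by
    intro p hp
    obtain ⟨q, hq, rfl⟩ := Finset.mem_image.1 hp
    rw [Finset.mem_product] at hq ⊢
    exact ⟨Finset.mem_powerset.2 (Finset.singleton_subset_iff.2 hq.1),
      Finset.mem_powerset.2 (Finset.singleton_subset_iff.2 hq.2)⟩
  have hvan : ∀ p ∈ I.powerset ×ˢ J.powerset, p ∉ Finset.image e (I ×ˢ J) → F p = 0 := by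
    intro p hp hnp
    by_contra h0
    have hne : ofMatrix m p.1 p.2 ≠ 0 := by
      intro hz
      apply h0
      rw [hFdef]
      dsimp only
      rw [hz, mul_zero, zero_mul]
    obtain ⟨⟨i, hA⟩, ⟨j, hB⟩⟩ := ofMatrix_support hne
    apply hnp
    rw [Finset.mem_product] at hp
    refine Finset.mem_image.2 ⟨(i, j), Finset.mem_product.2 ⟨?_, ?_⟩, ?_⟩
    · exact Finset.singleton_subset_iff.1 (Finset.mem_powerset.1 (hA ▸ hp.1))
    · exact Finset.singleton_subset_iff.1 (Finset.mem_powerset.1 (hB ▸ hp.2))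
    · rw [he]; dsimp only; rw [← hA, ← hB]
  rw [hF, ← Finset.sum_product']
  calc ∑ p ∈ I.powerset ×ˢ J.powerset, F p
      = ∑ p ∈ Finset.image e (I ×ˢ J), F p := (Finset.sum_subset hsub hvan).symm
    _ = ∑ x ∈ I ×ˢ J, F (e x) := Finset.sum_image hinj
    _ = ∑ x ∈ I ×ˢ J, shuffleSign {x.1} (I \ {x.1}) * shuffleSign {x.2} (J \ {x.2}) * m x.1 x.2 *
          ω (I \ {x.1}) (J \ {x.2}) := by
        refine Finset.sum_congr rfl fun x _ => ?_
        rw [hFdef, he]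
        dsimp only
        rw [ofMatrix_singleton]

end DForm

namespace DForm

open Finset

variable {n : ℕ}

lemma dpow_ofMatrix (h : Matrix (Fin n) (Fin n) ℝ) : ∀ (k : ℕ) (I J : Finset (Fin n)),
    dpow (ofMatrix h) k I J = (k.factorial : ℝ) * pdet k h I J := by
  intro k
  induction k with
  | zero =>
    intro I J
    by_cases h0 : I = ∅ ∧ J = ∅
    · show (if I = ∅ ∧ J = ∅ then (1 : ℝ) else 0) = _
      rw [if_pos h0, pdet_of_card h (by rw [h0.1]; rfl) (by rw [h0.2]; rfl),
        Matrix.det_fin_zero]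
      norm_num
    · show (if I = ∅ ∧ J = ∅ then (1 : ℝ) else 0) = _
      rw [if_neg h0, pdet_eq_zero h, mul_zero]
      rw [Finset.card_eq_zero, Finset.card_eq_zero]
      exact h0
  | succ k ih =>
    intro I J
    show wedge (ofMatrix h) (dpow (ofMatrix h) k) I J = _
    rw [wedge_ofMatrix]
    by_cases hc : I.card = k + 1 ∧ J.card = k + 1
    · obtain ⟨hI, hJ⟩ := hc
      rw [sum_emb hI]
      have hrw : ∀ r : Fin (k + 1),
          (∑ j ∈ J, shuffleSign {I.orderEmbOfFin hI r} (I \ {I.orderEmbOfFin hI r}) *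
            shuffleSign {j} (J \ {j}) * h (I.orderEmbOfFin hI r) j *
            dpow (ofMatrix h) k (I \ {I.orderEmbOfFin hI r}) (J \ {j}))
          = (k.factorial : ℝ) * pdet (k + 1) h I J := by
        intro r
        rw [sum_emb hJ]
        have := pdet_laplace h hI hJ r
        calc ∑ c : Fin (k + 1), shuffleSign {I.orderEmbOfFin hI r} (I \ {I.orderEmbOfFin hI r}) *
              shuffleSign {J.orderEmbOfFin hJ c} (J \ {J.orderEmbOfFin hJ c}) *
              h (I.orderEmbOfFin hI r) (J.orderEmbOfFin hJ c) *
              dpow (ofMatrix h) k (I \ {I.orderEmbOfFin hI r}) (J \ {J.orderEmbOfFin hJ c})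
            = ∑ c : Fin (k + 1), (k.factorial : ℝ) *
              ((-1 : ℝ) ^ ((r : ℕ) + (c : ℕ)) * h (I.orderEmbOfFin hI r) (J.orderEmbOfFin hJ c) *
                pdet k h (I.erase (I.orderEmbOfFin hI r)) (J.erase (J.orderEmbOfFin hJ c))) := by
              refine Finset.sum_congr rfl fun c _ => ?_
              rw [shuffleSign_emb, shuffleSign_emb, ih, Finset.erase_eq, Finset.erase_eq, pow_add]
              ring
          _ = (k.factorial : ℝ) * pdet (k + 1) h I J := by
              rw [← Finset.mul_sum, ← this]
      rw [Finset.sum_congr rfl fun r _ => hrw r, Finset.sum_const, Finset.card_univ,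
        Fintype.card_fin, nsmul_eq_mul, Nat.factorial_succ]
      push_cast
      ring
    · have hz : ∀ i ∈ I, ∀ j ∈ J, pdet k h (I \ {i}) (J \ {j}) = 0 := by
        intro i hi j hj
        apply pdet_eq_zero
        rw [Finset.card_sdiff_of_subset (Finset.singleton_subset_iff.2 hi),
          Finset.card_sdiff_of_subset (Finset.singleton_subset_iff.2 hj), Finset.card_singleton,
          Finset.card_singleton]
        have h1 : 1 ≤ I.card := Finset.card_pos.2 ⟨i, hi⟩
        have h2 : 1 ≤ J.card := Finset.card_pos.2 ⟨j, hj⟩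
        rintro ⟨ha, hb⟩
        exact hc ⟨by omega, by omega⟩
      rw [pdet_eq_zero h hc, mul_zero]
      apply Finset.sum_eq_zero; intro i hi
      apply Finset.sum_eq_zero; intro j hj
      rw [ih, hz i hi j hj, mul_zero, mul_zero]

lemma pdet_one (k : ℕ) (I J : Finset (Fin n)) :
    pdet k (1 : Matrix (Fin n) (Fin n) ℝ) I J = if I = J ∧ I.card = k then 1 else 0 := by
  by_cases hc : I.card = k ∧ J.card = k
  · rw [pdet_of_card _ hc.1 hc.2]
    by_cases hIJ : I = J
    · subst hIJ
      rw [if_pos ⟨rfl, hc.1⟩]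
      have hone : (Matrix.of fun a b : Fin k =>
          (1 : Matrix (Fin n) (Fin n) ℝ) (I.orderEmbOfFin hc.1 a) (I.orderEmbOfFin hc.2 b))
          = (1 : Matrix (Fin k) (Fin k) ℝ) := by
        ext a b
        rw [Matrix.of_apply, Matrix.one_apply, Matrix.one_apply]
        have : I.orderEmbOfFin hc.1 a = I.orderEmbOfFin hc.2 b ↔ a = b := by
          constructor
          · intro hx; exact (I.orderEmbOfFin hc.1).injective hx
          · rintro rfl; rfl
        by_cases hab : a = b
        · rw [if_pos (this.2 hab), if_pos hab]
        · rw [if_neg (fun hx => hab (this.1 hx)), if_neg hab]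
      rw [hone, Matrix.det_one]
    · rw [if_neg (fun hx => hIJ hx.1)]
      have hex : ∃ x, x ∈ I ∧ x ∉ J := by
        by_contra hall
        push_neg at hall
        exact hIJ (Finset.eq_of_subset_of_card_le (fun x hx => hall x hx)
          (by rw [hc.1, hc.2]))
      obtain ⟨x, hxI, hxJ⟩ := hex
      have hrange : x ∈ Set.range (I.orderEmbOfFin hc.1) := by
        rw [Finset.range_orderEmbOfFin]; exact Finset.mem_coe.2 hxI
      obtain ⟨a, ha⟩ := hrange
      apply Matrix.det_eq_zero_of_row_eq_zero a
      intro b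
      rw [Matrix.of_apply, ha, Matrix.one_apply, if_neg]
      intro hx
      exact hxJ (hx ▸ Finset.orderEmbOfFin_mem J hc.2 b)
  · rw [pdet_eq_zero _ hc, if_neg]
    rintro ⟨rfl, hk⟩
    exact hc ⟨hk, hk⟩

lemma gMetric_eq_ofMatrix : gMetric n = ofMatrix (1 : Matrix (Fin n) (Fin n) ℝ) := by
  funext I J
  rw [gMetric]
  by_cases h1 : I = J ∧ I.card = 1
  · obtain ⟨i, hi⟩ := Finset.card_eq_one.1 h1.2
    rw [if_pos h1, ← h1.1, hi, ofMatrix_singleton, Matrix.one_apply_eq]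
  · rw [if_neg h1]
    symm
    apply Finset.sum_eq_zero; intro i _
    apply Finset.sum_eq_zero; intro j _
    rw [ite_eq_right_iff]
    rintro ⟨hI, hJ⟩
    rw [Matrix.one_apply, if_neg]
    intro hij
    apply h1
    subst hij
    exact ⟨hI.trans hJ.symm, by rw [hI]; exact Finset.card_singleton i⟩

lemma dpow_gMetric (m : ℕ) (A B : Finset (Fin n)) :
    dpow (gMetric n) m A B
      = (m.factorial : ℝ) * if A = B ∧ A.card = m then 1 else 0 := by
  rw [gMetric_eq_ofMatrix, dpow_ofMatrix, pdet_one]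

end DForm

namespace DForm

open Finset

variable {n : ℕ}

lemma subset_compl_singleton_iff (A : Finset (Fin n)) (i : Fin n) :
    A ⊆ ({i} : Finset (Fin n))ᶜ ↔ i ∉ A := by
  constructor
  · intro hs hi
    have := hs hi
    rw [Finset.mem_compl, Finset.mem_singleton] at this
    exact this rfl
  · intro hi x hx
    rw [Finset.mem_compl, Finset.mem_singleton]
    rintro rfl
    exact hi hx

lemma compl_sdiff_eq_erase (A : Finset (Fin n)) (i : Fin n) :
    ({i} : Finset (Fin n))ᶜ \ A = Aᶜ.erase i := by
  ext x
  simp only [Finset.mem_sdiff, Finset.mem_compl, Finset.mem_singleton, Finset.mem_erase]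

lemma filter_gt_compl_singleton (i : Fin n) :
    (({i} : Finset (Fin n))ᶜ.filter (fun a => i < a)) = Finset.univ.filter (fun a => i < a) := by
  ext a
  simp only [Finset.mem_filter, Finset.mem_compl, Finset.mem_singleton, Finset.mem_univ,
    true_and]
  exact ⟨And.right, fun h => ⟨ne_of_gt h, h⟩⟩

lemma count_split (T : Finset (Fin n)) (i : Fin n) (hi : i ∈ T) :
    (Finset.univ.filter (fun x => i < x)).card + (T.filter (fun x => x < i)).card
      = (Tᶜ.filter (fun x => i < x)).card + (T.card - 1) := by
  have h1 : (Finset.univ.filter (fun x : Fin n => i < x)).card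
      = (T.filter (fun x => i < x)).card + (Tᶜ.filter (fun x => i < x)).card := by
    rw [← Finset.card_union_of_disjoint
      (Finset.disjoint_filter_filter disjoint_compl_right), ← Finset.filter_union,
      Finset.union_compl]
  have h2 : (T.filter (fun x => i < x)).card + (T.filter (fun x => x < i)).card
      = T.card - 1 := by
    have hu : T.filter (fun x => i < x) ∪ T.filter (fun x => x < i) = T.erase i := by
      ext x
      simp only [Finset.mem_union, Finset.mem_filter, Finset.mem_erase]
      constructor
      · rintro (⟨hx, hlt⟩ | ⟨hx, hlt⟩)
        · exact ⟨(ne_of_lt hlt).symm, hx⟩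
        · exact ⟨ne_of_lt hlt, hx⟩
      · rintro ⟨hne, hx⟩
        rcases lt_or_gt_of_ne hne with hlt | hlt
        · exact Or.inr ⟨hx, hlt⟩
        · exact Or.inl ⟨hx, hlt⟩
    have hd : Disjoint (T.filter (fun x => i < x)) (T.filter (fun x => x < i)) := by
      rw [Finset.disjoint_left]
      intro x hx1 hx2
      rw [Finset.mem_filter] at hx1 hx2
      exact absurd (hx1.2.trans hx2.2) (lt_irrefl i)
    rw [← Finset.card_union_of_disjoint hd, hu, Finset.card_erase_of_mem hi]
  omega

lemma sign_combine {T : Finset (Fin n)} {i : Fin n} (hi : i ∈ T) :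
    shuffleSign ({i} : Finset (Fin n))ᶜ {i} * shuffleSign Tᶜ (T.erase i)
      = shuffleSign {i} (T.erase i)
        * (-1 : ℝ) ^ ((∑ x ∈ T, (Tᶜ.filter (fun a => x < a)).card) + (T.card - 1)) := by
  have ha : shuffleSign ({i} : Finset (Fin n))ᶜ {i}
      = (-1 : ℝ) ^ (Finset.univ.filter (fun x => i < x)).card := by
    rw [shuffleSign, Finset.sum_singleton, filter_gt_compl_singleton]
  have hb : shuffleSign Tᶜ (T.erase i)
      = (-1 : ℝ) ^ (∑ x ∈ T.erase i, (Tᶜ.filter (fun a => x < a)).card) := rfl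
  have hc : shuffleSign ({i} : Finset (Fin n)) (T.erase i)
      = (-1 : ℝ) ^ (T.filter (fun x => x < i)).card := by
    rw [shuffleSign_singleton, filter_lt_erase]
  rw [ha, hb, hc, ← pow_add, ← pow_add]
  rw [neg_one_pow_eq_pow_mod_two, @neg_one_pow_eq_pow_mod_two ℝ _
    ((T.filter (fun x => x < i)).card + _)]
  congr 1
  have hsplit := count_split T i hi
  have hsum : (∑ x ∈ T, (Tᶜ.filter (fun a => x < a)).card)
      = (Tᶜ.filter (fun a => i < a)).card
        + ∑ x ∈ T.erase i, (Tᶜ.filter (fun a => x < a)).card := by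
    exact (Finset.add_sum_erase T (fun x => (Tᶜ.filter (fun a => x < a)).card) hi).symm
  omega

/-- The cofactor sum: `∂ s_k / ∂ h_{ij}`. -/
def cofT (h : Matrix (Fin n) (Fin n) ℝ) (k : ℕ) (i j : Fin n) : ℝ :=
  ∑ T : Finset (Fin n), if T.card = k ∧ i ∈ T ∧ j ∈ T then
    shuffleSign {i} (T.erase i) * shuffleSign {j} (T.erase j)
      * pdet (k - 1) h (T.erase i) (T.erase j)
  else 0

lemma wedge_g_pow (h : Matrix (Fin n) (Fin n) ℝ) (m q : ℕ) (I J : Finset (Fin n)) :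
    wedge (dpow (gMetric n) m) (dpow (ofMatrix h) q) I J
      = ∑ A ∈ I.powerset, if A ⊆ J ∧ A.card = m then
          (m.factorial : ℝ) * (q.factorial : ℝ) *
            (shuffleSign A (I \ A) * shuffleSign A (J \ A) * pdet q h (I \ A) (J \ A))
        else 0 := by
  rw [wedge]
  refine Finset.sum_congr rfl fun A hA => ?_
  have step : ∀ B ∈ J.powerset,
      shuffleSign A (I \ A) * shuffleSign B (J \ B) * dpow (gMetric n) m A B *
        dpow (ofMatrix h) q (I \ A) (J \ B)
      = if B = A then (if A.card = m then
          (m.factorial : ℝ) * (q.factorial : ℝ) *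
            (shuffleSign A (I \ A) * shuffleSign A (J \ A) * pdet q h (I \ A) (J \ A))
        else 0) else 0 := by
    intro B _
    rw [dpow_gMetric, dpow_ofMatrix]
    by_cases hBA : B = A
    · subst hBA
      by_cases hm : B.card = m
      · rw [if_pos rfl, if_pos hm, if_pos ⟨rfl, hm⟩]
        ring
      · rw [if_pos rfl, if_neg hm, if_neg (fun hx => hm hx.2)]
        ring
    · rw [if_neg hBA, if_neg (fun hx => hBA hx.1.symm)]
      ring
  rw [Finset.sum_congr rfl step, Finset.sum_ite_eq' J.powerset A]
  simp only [Finset.mem_powerset]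
  by_cases hAJ : A ⊆ J
  · rw [if_pos hAJ]
    by_cases hm : A.card = m
    · rw [if_pos hm, if_pos ⟨hAJ, hm⟩]
    · rw [if_neg hm, if_neg (fun hx => hm hx.2)]
  · rw [if_neg hAJ, if_neg (fun hx => hAJ hx.1)]

lemma tInv_single (h : Matrix (Fin n) (Fin n) ℝ) (k : ℕ) (hk1 : 1 ≤ k) (hkn : k ≤ n)
    (i j : Fin n) : tInv h (k - 1) {i} {j} = cofT h k i j := by
  have hm : n - 1 - (k - 1) = n - k := by omega
  have hfac : (((k - 1).factorial * (n - 1 - (k - 1)).factorial : ℕ) : ℝ) ≠ 0 := by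
    exact_mod_cast Nat.mul_ne_zero (Nat.factorial_ne_zero _) (Nat.factorial_ne_zero _)
  have hsmul : tInv h (k - 1) {i} {j}
      = (((k - 1).factorial * (n - 1 - (k - 1)).factorial : ℕ) : ℝ)⁻¹ *
        (shuffleSign ({i} : Finset (Fin n))ᶜ {i} * shuffleSign ({j} : Finset (Fin n))ᶜ {j} *
          wedge (dpow (gMetric n) (n - 1 - (k - 1))) (dpow (ofMatrix h) (k - 1)) {i}ᶜ {j}ᶜ) := by
    rw [tInv]
    rfl
  rw [hsmul, wedge_g_pow]
  -- pull the factorial constant out of the sum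
  have hpull : ∀ A ∈ ({i} : Finset (Fin n))ᶜ.powerset,
      (if A ⊆ ({j} : Finset (Fin n))ᶜ ∧ A.card = n - 1 - (k - 1) then
        ((n - 1 - (k - 1)).factorial : ℝ) * ((k - 1).factorial : ℝ) *
          (shuffleSign A ({i}ᶜ \ A) * shuffleSign A ({j}ᶜ \ A) *
            pdet (k - 1) h ({i}ᶜ \ A) ({j}ᶜ \ A))
      else 0)
      = ((n - 1 - (k - 1)).factorial : ℝ) * ((k - 1).factorial : ℝ) *
        (if A ⊆ ({j} : Finset (Fin n))ᶜ ∧ A.card = n - 1 - (k - 1) then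
          shuffleSign A ({i}ᶜ \ A) * shuffleSign A ({j}ᶜ \ A) *
            pdet (k - 1) h ({i}ᶜ \ A) ({j}ᶜ \ A)
        else 0) := by
    intro A _
    split
    · rfl
    · rw [mul_zero]
  rw [Finset.sum_congr rfl hpull, ← Finset.mul_sum]
  have hconst : (((k - 1).factorial * (n - 1 - (k - 1)).factorial : ℕ) : ℝ)⁻¹ *
      (shuffleSign ({i} : Finset (Fin n))ᶜ {i} * shuffleSign ({j} : Finset (Fin n))ᶜ {j} *
        (((n - 1 - (k - 1)).factorial : ℝ) * ((k - 1).factorial : ℝ) * ?S))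
      = shuffleSign ({i} : Finset (Fin n))ᶜ {i} * shuffleSign ({j} : Finset (Fin n))ᶜ {j} * ?S
      := ?foo
  case S => exact ∑ A ∈ ({i} : Finset (Fin n))ᶜ.powerset,
      (if A ⊆ ({j} : Finset (Fin n))ᶜ ∧ A.card = n - 1 - (k - 1) then
        shuffleSign A ({i}ᶜ \ A) * shuffleSign A ({j}ᶜ \ A) *
          pdet (k - 1) h ({i}ᶜ \ A) ({j}ᶜ \ A)
      else 0)
  case foo =>
    push_cast at hfac ⊢
    field_simp
  rw [hconst]
  -- move the ε signs into the sum, extend to a sum over all subsets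
  rw [Finset.mul_sum]
  have hext : ∀ A : Finset (Fin n), A ∈ Finset.univ → A ∉ ({i} : Finset (Fin n))ᶜ.powerset →
      (fun A => if A ⊆ ({i} : Finset (Fin n))ᶜ ∧ A ⊆ ({j} : Finset (Fin n))ᶜ ∧
          A.card = n - 1 - (k - 1) then
        shuffleSign ({i} : Finset (Fin n))ᶜ {i} * shuffleSign ({j} : Finset (Fin n))ᶜ {j} *
          (shuffleSign A ({i}ᶜ \ A) * shuffleSign A ({j}ᶜ \ A) *
            pdet (k - 1) h ({i}ᶜ \ A) ({j}ᶜ \ A))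
      else 0) A = 0 := by
    intro A _ hA
    dsimp only
    rw [if_neg]
    rintro ⟨h1, -, -⟩
    exact hA (Finset.mem_powerset.2 h1)
  have hstep : ∑ A ∈ ({i} : Finset (Fin n))ᶜ.powerset,
      shuffleSign ({i} : Finset (Fin n))ᶜ {i} * shuffleSign ({j} : Finset (Fin n))ᶜ {j} *
        (if A ⊆ ({j} : Finset (Fin n))ᶜ ∧ A.card = n - 1 - (k - 1) then
          shuffleSign A ({i}ᶜ \ A) * shuffleSign A ({j}ᶜ \ A) *
            pdet (k - 1) h ({i}ᶜ \ A) ({j}ᶜ \ A)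
        else 0)
      = ∑ A : Finset (Fin n),
        (if A ⊆ ({i} : Finset (Fin n))ᶜ ∧ A ⊆ ({j} : Finset (Fin n))ᶜ ∧
            A.card = n - 1 - (k - 1) then
          shuffleSign ({i} : Finset (Fin n))ᶜ {i} * shuffleSign ({j} : Finset (Fin n))ᶜ {j} *
            (shuffleSign A ({i}ᶜ \ A) * shuffleSign A ({j}ᶜ \ A) *
              pdet (k - 1) h ({i}ᶜ \ A) ({j}ᶜ \ A))
        else 0) := by
    rw [← Finset.sum_subset (Finset.subset_univ ({i} : Finset (Fin n))ᶜ.powerset) hext]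
    refine Finset.sum_congr rfl fun A hA => ?_
    have hAi : A ⊆ ({i} : Finset (Fin n))ᶜ := Finset.mem_powerset.1 hA
    by_cases hc : A ⊆ ({j} : Finset (Fin n))ᶜ ∧ A.card = n - 1 - (k - 1)
    · rw [if_pos hc, if_pos ⟨hAi, hc.1, hc.2⟩]
    · rw [if_neg hc, mul_zero, if_neg (fun hx => hc ⟨hx.2.1, hx.2.2⟩)]
  rw [hstep]
  -- reindex by complementation
  have hcompl : ∀ A : Finset (Fin n),
      (if A ⊆ ({i} : Finset (Fin n))ᶜ ∧ A ⊆ ({j} : Finset (Fin n))ᶜ ∧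
          A.card = n - 1 - (k - 1) then
        shuffleSign ({i} : Finset (Fin n))ᶜ {i} * shuffleSign ({j} : Finset (Fin n))ᶜ {j} *
          (shuffleSign A ({i}ᶜ \ A) * shuffleSign A ({j}ᶜ \ A) *
            pdet (k - 1) h ({i}ᶜ \ A) ({j}ᶜ \ A))
      else 0)
      = (if Aᶜ.card = k ∧ i ∈ Aᶜ ∧ j ∈ Aᶜ then
          shuffleSign {i} (Aᶜ.erase i) * shuffleSign {j} (Aᶜ.erase j)
            * pdet (k - 1) h (Aᶜ.erase i) (Aᶜ.erase j)
        else 0) := by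
    intro A
    have hTn : Aᶜ.card ≤ n := by
      have := Finset.card_le_univ Aᶜ
      simpa using this
    have hAcard : A.card + Aᶜ.card = n := by
      have h1 : Aᶜ.card = n - A.card := by
        rw [Finset.card_compl, Fintype.card_fin]
      have h2 : A.card ≤ n := by
        have := Finset.card_le_univ A
        simpa using this
      omega
    have hcond : (A ⊆ ({i} : Finset (Fin n))ᶜ ∧ A ⊆ ({j} : Finset (Fin n))ᶜ ∧
        A.card = n - 1 - (k - 1)) ↔ (Aᶜ.card = k ∧ i ∈ Aᶜ ∧ j ∈ Aᶜ) := by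
      rw [subset_compl_singleton_iff, subset_compl_singleton_iff, Finset.mem_compl,
        Finset.mem_compl]
      constructor
      · rintro ⟨h1, h2, h3⟩; exact ⟨by omega, h1, h2⟩
      · rintro ⟨h1, h2, h3⟩; exact ⟨h2, h3, by omega⟩
    by_cases hc : Aᶜ.card = k ∧ i ∈ Aᶜ ∧ j ∈ Aᶜ
    · rw [if_pos (hcond.2 hc), if_pos hc]
      have hsd1 : ({i} : Finset (Fin n))ᶜ \ A = Aᶜ.erase i := compl_sdiff_eq_erase A i
      have hsd2 : ({j} : Finset (Fin n))ᶜ \ A = Aᶜ.erase j := compl_sdiff_eq_erase A j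
      rw [hsd1, hsd2]
      have e1 := sign_combine hc.2.1
      have e2 := sign_combine hc.2.2
      set D := (∑ x ∈ Aᶜ, ((Aᶜᶜ).filter (fun a => x < a)).card) + (Aᶜ.card - 1) with hD
      rw [show shuffleSign ({i} : Finset (Fin n))ᶜ {i} * shuffleSign ({j} : Finset (Fin n))ᶜ {j} *
          (shuffleSign A (Aᶜ.erase i) * shuffleSign A (Aᶜ.erase j)
            * pdet (k - 1) h (Aᶜ.erase i) (Aᶜ.erase j))
          = (shuffleSign ({i} : Finset (Fin n))ᶜ {i} * shuffleSign (Aᶜᶜ) (Aᶜ.erase i)) *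
            ((shuffleSign ({j} : Finset (Fin n))ᶜ {j} * shuffleSign (Aᶜᶜ) (Aᶜ.erase j)) *
              pdet (k - 1) h (Aᶜ.erase i) (Aᶜ.erase j)) by rw [compl_compl]; ring]
      rw [e1, e2]
      have hDD : (-1 : ℝ) ^ D * (-1 : ℝ) ^ D = 1 := by
        rw [← pow_add]
        exact Even.neg_one_pow ⟨D, rfl⟩
      calc shuffleSign {i} (Aᶜ.erase i) * (-1 : ℝ) ^ D *
            (shuffleSign {j} (Aᶜ.erase j) * (-1 : ℝ) ^ D *
              pdet (k - 1) h (Aᶜ.erase i) (Aᶜ.erase j))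
          = shuffleSign {i} (Aᶜ.erase i) * shuffleSign {j} (Aᶜ.erase j) *
              pdet (k - 1) h (Aᶜ.erase i) (Aᶜ.erase j) * ((-1 : ℝ) ^ D * (-1 : ℝ) ^ D) := by
            ring
        _ = _ := by rw [hDD, mul_one]
    · rw [if_neg (fun hx => hc (hcond.1 hx)), if_neg hc]
  rw [Finset.sum_congr rfl fun A _ => hcompl A]
  rw [cofT]
  exact Equiv.sum_comp ⟨compl, compl, compl_compl, compl_compl⟩
    (fun T : Finset (Fin n) => if T.card = k ∧ i ∈ T ∧ j ∈ T then
      shuffleSign {i} (T.erase i) * shuffleSign {j} (T.erase j)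
        * pdet (k - 1) h (T.erase i) (T.erase j) else 0)

end DForm

namespace DForm

open Finset Polynomial

variable {n : ℕ}

lemma det_piecewise_one {R : Type*} [CommRing R] (A : Matrix (Fin n) (Fin n) R)
    (S : Finset (Fin n)) {p m : ℕ} (hp : S.card = p) (hc : Sᶜ.card = m) :
    Matrix.det (Matrix.of (S.piecewise (fun i => Pi.single i (1 : R)) (fun i => A i)))
      = Matrix.det (A.submatrix (Sᶜ.orderEmbOfFin hc) (Sᶜ.orderEmbOfFin hc)) := by
  set eS := S.orderEmbOfFin hp with heS
  set eC := Sᶜ.orderEmbOfFin hc with heC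
  have hinj : Function.Injective (Sum.elim (fun a => eS a) (fun b => eC b)) := by
    intro x y hxy
    have hmemS : ∀ a : Fin p, eS a ∈ S := fun a => Finset.orderEmbOfFin_mem _ _ _
    have hmemC : ∀ b : Fin m, eC b ∈ Sᶜ := fun b => Finset.orderEmbOfFin_mem _ _ _
    cases x with
    | inl a =>
      cases y with
      | inl b =>
        rw [Sum.elim_inl, Sum.elim_inl] at hxy
        exact congrArg Sum.inl (eS.injective hxy)
      | inr b =>
        rw [Sum.elim_inl, Sum.elim_inr] at hxy
        exact absurd (hxy ▸ hmemS a) (Finset.mem_compl.1 (hmemC b))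
    | inr a =>
      cases y with
      | inl b =>
        rw [Sum.elim_inr, Sum.elim_inl] at hxy
        exact absurd (hxy ▸ hmemS b) (Finset.mem_compl.1 (hmemC a))
      | inr b =>
        rw [Sum.elim_inr, Sum.elim_inr] at hxy
        exact congrArg Sum.inr (eC.injective hxy)
  have hbij : Function.Bijective (Sum.elim (fun a => eS a) (fun b => eC b)) := by
    refine (Fintype.bijective_iff_injective_and_card _).2 ⟨hinj, ?_⟩
    rw [Fintype.card_sum, Fintype.card_fin, Fintype.card_fin, Fintype.card_fin]
    have := Finset.card_add_card_compl S
    rw [Fintype.card_fin] at this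
    omega
  set e : Fin p ⊕ Fin m ≃ Fin n := Equiv.ofBijective _ hbij with he
  rw [← Matrix.det_submatrix_equiv_self e]
  have hblocks : (Matrix.of (S.piecewise (fun i => Pi.single i (1 : R)) (fun i => A i))).submatrix
      e e = Matrix.fromBlocks 1 0 (A.submatrix eC eS) (A.submatrix eC eC) := by
    ext i j
    have happ : ∀ x, e x = Sum.elim (fun a => eS a) (fun b => eC b) x := fun x => rfl
    cases i with
    | inl a =>
      have hmem : eS a ∈ S := Finset.orderEmbOfFin_mem _ _ _
      cases j with
      | inl b =>
        rw [Matrix.submatrix_apply, happ, happ, Sum.elim_inl, Sum.elim_inl]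
        rw [Matrix.of_apply, Finset.piecewise_eq_of_mem _ _ _ hmem]
        rw [Matrix.fromBlocks_apply₁₁, Pi.single_apply, Matrix.one_apply]
        by_cases hab : a = b
        · rw [if_pos hab, if_pos (by rw [hab])]
        · rw [if_neg hab, if_neg (fun hx => hab (eS.injective hx).symm)]
      | inr b =>
        rw [Matrix.submatrix_apply, happ, happ, Sum.elim_inl, Sum.elim_inr]
        rw [Matrix.of_apply, Finset.piecewise_eq_of_mem _ _ _ hmem]
        rw [Matrix.fromBlocks_apply₁₂, Pi.single_apply, if_neg]
        · rfl
        · intro hx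
          have h1 : eC b ∈ Sᶜ := Finset.orderEmbOfFin_mem _ _ _
          rw [hx] at h1
          exact (Finset.mem_compl.1 h1) hmem
    | inr a =>
      have hmem : eC a ∈ Sᶜ := Finset.orderEmbOfFin_mem _ _ _
      have hnotmem : eC a ∉ S := Finset.mem_compl.1 hmem
      cases j with
      | inl b =>
        rw [Matrix.submatrix_apply, happ, happ, Sum.elim_inr, Sum.elim_inl]
        rw [Matrix.of_apply, Finset.piecewise_eq_of_notMem _ _ _ hnotmem]
        rfl
      | inr b =>
        rw [Matrix.submatrix_apply, happ, happ, Sum.elim_inr, Sum.elim_inr]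
        rw [Matrix.of_apply, Finset.piecewise_eq_of_notMem _ _ _ hnotmem]
        rfl
  rw [hblocks, Matrix.det_fromBlocks_zero₁₂, Matrix.det_one, one_mul]

lemma charpoly_expand (h : Matrix (Fin n) (Fin n) ℝ) :
    h.charpoly = ∑ S : Finset (Fin n),
      Polynomial.monomial S.card ((-1 : ℝ) ^ Sᶜ.card * pdet Sᶜ.card h Sᶜ Sᶜ) := by
  set a : Fin n → Fin n → ℝ[X] := fun i => (X : ℝ[X]) • (Pi.single i 1 : Fin n → ℝ[X]) with ha
  set b : Fin n → Fin n → ℝ[X] := fun i j => -C (h i j) with hb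
  have hmat : h.charmatrix = Matrix.of (a + b) := by
    refine Matrix.ext fun i j => ?_
    rw [Matrix.charmatrix_apply]
    rw [Matrix.of_apply]
    show Matrix.diagonal (fun _ => X) i j - C (h i j) = a i j + b i j
    rw [ha, hb]
    simp only [Pi.add_apply, Pi.smul_apply, smul_eq_mul]
    rw [Matrix.diagonal_apply, Pi.single_apply, sub_eq_add_neg]
    congr 1
    by_cases hij : i = j
    · rw [if_pos hij, if_pos hij.symm, mul_one]
    · rw [if_neg hij, if_neg (fun hx => hij hx.symm), mul_zero]
  have hdet : h.charpoly = Matrix.detRowAlternating (a + b) := by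
    rw [Matrix.charpoly, hmat]
    rfl
  have hexp := (Matrix.detRowAlternating :
    (Fin n → ℝ[X]) [⋀^Fin n]→ₗ[ℝ[X]] ℝ[X]).toMultilinearMap.map_add_univ a b
  simp only [AlternatingMap.coe_multilinearMap] at hexp
  rw [hdet, hexp]
  refine Finset.sum_congr rfl fun S _ => ?_
  set u : Fin n → Fin n → ℝ[X] := S.piecewise (fun i => Pi.single i 1) b with hu
  have h1 : S.piecewise a b = S.piecewise (fun i => (X : ℝ[X]) • u i) u := by
    funext i
    by_cases hiS : i ∈ S
    · rw [Finset.piecewise_eq_of_mem _ _ _ hiS, Finset.piecewise_eq_of_mem _ _ _ hiS, hu,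
        Finset.piecewise_eq_of_mem _ _ _ hiS]
    · rw [Finset.piecewise_eq_of_notMem _ _ _ hiS, Finset.piecewise_eq_of_notMem _ _ _ hiS, hu,
        Finset.piecewise_eq_of_notMem _ _ _ hiS]
  set w : Fin n → Fin n → ℝ[X] := S.piecewise (fun i => Pi.single i 1)
    (fun i j => C (h i j)) with hw
  have h2 : u = Sᶜ.piecewise (fun i => (-1 : ℝ[X]) • w i) w := by
    funext i
    by_cases hiS : i ∈ S
    · have hiC : i ∉ Sᶜ := by rw [Finset.mem_compl]; exact fun hx => hx hiS
      rw [hu, Finset.piecewise_eq_of_mem _ _ _ hiS, Finset.piecewise_eq_of_notMem _ _ _ hiC, hw,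
        Finset.piecewise_eq_of_mem _ _ _ hiS]
    · have hiC : i ∈ Sᶜ := Finset.mem_compl.2 hiS
      rw [hu, Finset.piecewise_eq_of_notMem _ _ _ hiS, Finset.piecewise_eq_of_mem _ _ _ hiC, hw,
        Finset.piecewise_eq_of_notMem _ _ _ hiS, hb]
      funext j
      show -C (h i j) = (-1 : ℝ[X]) • C (h i j)
      rw [neg_one_smul]
  have hs1 := (Matrix.detRowAlternating :
    (Fin n → ℝ[X]) [⋀^Fin n]→ₗ[ℝ[X]] ℝ[X]).toMultilinearMap.map_piecewise_smul
      (fun _ => (X : ℝ[X])) u S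
  have hs2 := (Matrix.detRowAlternating :
    (Fin n → ℝ[X]) [⋀^Fin n]→ₗ[ℝ[X]] ℝ[X]).toMultilinearMap.map_piecewise_smul
      (fun _ => (-1 : ℝ[X])) w Sᶜ
  simp only [AlternatingMap.coe_multilinearMap] at hs1 hs2
  rw [h1, hs1, h2, hs2]
  have h3 : Matrix.detRowAlternating w = C (pdet Sᶜ.card h Sᶜ Sᶜ) := by
    have hdw : Matrix.detRowAlternating w
        = Matrix.det (Matrix.of (S.piecewise (fun i => Pi.single i (1 : ℝ[X]))
          (fun i => (h.map (C : ℝ →+* ℝ[X])) i))) := rfl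
    rw [hdw, det_piecewise_one (h.map (C : ℝ →+* ℝ[X])) S rfl rfl]
    rw [pdet_of_card h rfl rfl]
    rw [RingHom.map_det]
    congr 1
  rw [h3, Finset.prod_const, Finset.prod_const]
  have hXp : ((X : ℝ[X]) ^ S.card) • (((-1 : ℝ[X]) ^ Sᶜ.card) • C (pdet Sᶜ.card h Sᶜ Sᶜ))
      = Polynomial.monomial S.card ((-1 : ℝ) ^ Sᶜ.card * pdet Sᶜ.card h Sᶜ Sᶜ) := by
    rw [smul_eq_mul, smul_eq_mul]
    have hC : ((-1 : ℝ[X])) ^ Sᶜ.card = C ((-1 : ℝ) ^ Sᶜ.card) := by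
      rw [map_pow, map_neg, map_one]
    calc (X : ℝ[X]) ^ S.card * ((-1 : ℝ[X]) ^ Sᶜ.card * C (pdet Sᶜ.card h Sᶜ Sᶜ))
        = (C ((-1 : ℝ) ^ Sᶜ.card) * C (pdet Sᶜ.card h Sᶜ Sᶜ)) * (X : ℝ[X]) ^ S.card := by
          rw [hC]; ring
      _ = C ((-1 : ℝ) ^ Sᶜ.card * pdet Sᶜ.card h Sᶜ Sᶜ) * (X : ℝ[X]) ^ S.card := by
          rw [← C_mul]
      _ = _ := C_mul_X_pow_eq_monomial
  rw [hXp]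

lemma sInv_eq (h : Matrix (Fin n) (Fin n) ℝ) (k : ℕ) (hk : k ≤ n) :
    sInv h k = ∑ T : Finset (Fin n), if T.card = k then pdet k h T T else 0 := by
  rw [sInv, charpoly_expand, Polynomial.finset_sum_coeff]
  have hstep : ∀ S : Finset (Fin n),
      (Polynomial.monomial S.card ((-1 : ℝ) ^ Sᶜ.card * pdet Sᶜ.card h Sᶜ Sᶜ)).coeff (n - k)
      = if Sᶜ.card = k then (-1 : ℝ) ^ k * pdet k h Sᶜ Sᶜ else 0 := by
    intro S
    rw [Polynomial.coeff_monomial]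
    have hcards : S.card + Sᶜ.card = n := by
      have := Finset.card_add_card_compl S
      rw [Fintype.card_fin] at this
      exact this
    by_cases hc : Sᶜ.card = k
    · rw [if_pos (by omega), if_pos hc, hc]
    · rw [if_neg (by omega), if_neg hc]
  rw [Finset.sum_congr rfl fun S _ => hstep S, Finset.mul_sum]
  have hcomp : ∀ T : Finset (Fin n),
      (-1 : ℝ) ^ k * (if (Tᶜ)ᶜ.card = k then (-1 : ℝ) ^ k * pdet k h (Tᶜ)ᶜ (Tᶜ)ᶜ else 0)
      = (if T.card = k then pdet k h T T else 0) := by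
    intro T
    rw [compl_compl]
    by_cases hc : T.card = k
    · rw [if_pos hc, if_pos hc, ← mul_assoc, ← pow_add]
      rw [Even.neg_one_pow ⟨k, rfl⟩, one_mul]
    · rw [if_neg hc, if_neg hc, mul_zero]
  have hre := Equiv.sum_comp
    (⟨compl, compl, compl_compl, compl_compl⟩ : Finset (Fin n) ≃ Finset (Fin n))
    (fun S : Finset (Fin n) => (-1 : ℝ) ^ k *
      (if Sᶜ.card = k then (-1 : ℝ) ^ k * pdet k h Sᶜ Sᶜ else 0))
  rw [← hre]
  exact Finset.sum_congr rfl fun T _ => hcomp T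

end DForm

namespace DForm

open Finset

variable {n : ℕ}

lemma hasDerivAt_det_general {k : ℕ} (N : ℝ → Matrix (Fin k) (Fin k) ℝ)
    (N' : Matrix (Fin k) (Fin k) ℝ) (t : ℝ)
    (hN : ∀ a b, HasDerivAt (fun s => N s a b) (N' a b) t) :
    HasDerivAt (fun s => (N s).det)
      (∑ a : Fin k, ((N t).updateCol a (fun r => N' r a)).det) t := by
  have hder : HasDerivAt
      (fun s => ∑ σ : Equiv.Perm (Fin k), ((Equiv.Perm.sign σ : ℤ) : ℝ) * ∏ i, N s (σ i) i)
      (∑ σ : Equiv.Perm (Fin k), ((Equiv.Perm.sign σ : ℤ) : ℝ) *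
        ∑ a ∈ Finset.univ, (∏ b ∈ Finset.univ.erase a, N t (σ b) b) • N' (σ a) a) t := by
    apply HasDerivAt.fun_sum
    intro σ _
    exact (HasDerivAt.fun_finsetProd (fun i _ => hN (σ i) i)).const_mul _
  have hfun : (fun s => (N s).det)
      = fun s => ∑ σ : Equiv.Perm (Fin k), ((Equiv.Perm.sign σ : ℤ) : ℝ) * ∏ i, N s (σ i) i :=
    funext fun s => Matrix.det_apply' (N s)
  rw [hfun]
  have hval : (∑ σ : Equiv.Perm (Fin k), ((Equiv.Perm.sign σ : ℤ) : ℝ) *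
        ∑ a ∈ Finset.univ, (∏ b ∈ Finset.univ.erase a, N t (σ b) b) • N' (σ a) a)
      = ∑ a : Fin k, ((N t).updateCol a (fun r => N' r a)).det := by
    have hsw : ∀ σ : Equiv.Perm (Fin k), ((Equiv.Perm.sign σ : ℤ) : ℝ) *
        ∑ a ∈ Finset.univ, (∏ b ∈ Finset.univ.erase a, N t (σ b) b) • N' (σ a) a
        = ∑ a : Fin k, ((Equiv.Perm.sign σ : ℤ) : ℝ) *
          ((∏ b ∈ Finset.univ.erase a, N t (σ b) b) * N' (σ a) a) := by
      intro σ
      rw [Finset.mul_sum]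
      refine Finset.sum_congr rfl fun a _ => ?_
      rw [smul_eq_mul]
    rw [Finset.sum_congr rfl fun σ _ => hsw σ, Finset.sum_comm]
    refine Finset.sum_congr rfl fun a _ => ?_
    rw [Matrix.det_apply']
    refine Finset.sum_congr rfl fun σ _ => ?_
    congr 1
    have hprod : ∏ b, ((N t).updateCol a (fun r => N' r a)) (σ b) b
        = ((N t).updateCol a (fun r => N' r a)) (σ a) a *
          ∏ b ∈ Finset.univ.erase a, ((N t).updateCol a (fun r => N' r a)) (σ b) b :=
      (Finset.mul_prod_erase Finset.univ _ (Finset.mem_univ a)).symm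
    rw [hprod, Matrix.updateCol_self]
    rw [Finset.prod_congr rfl fun b hb =>
      Matrix.updateCol_ne (Finset.ne_of_mem_erase hb)]
    ring
  rw [← hval]
  exact hder

lemma hasDerivAt_pdet {k : ℕ} (h h' : ℝ → Matrix (Fin n) (Fin n) ℝ)
    (hd : ∀ (i j : Fin n) (t : ℝ), HasDerivAt (fun s => h s i j) (h' t i j) t)
    (t : ℝ) {T : Finset (Fin n)} (hT : T.card = k + 1) :
    HasDerivAt (fun s => pdet (k + 1) (h s) T T)
      (∑ a : Fin (k + 1), ∑ r : Fin (k + 1),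
        (-1 : ℝ) ^ ((r : ℕ) + (a : ℕ)) * h' t (T.orderEmbOfFin hT r) (T.orderEmbOfFin hT a) *
          pdet k (h t) (T.erase (T.orderEmbOfFin hT r)) (T.erase (T.orderEmbOfFin hT a))) t := by
  set N : ℝ → Matrix (Fin (k + 1)) (Fin (k + 1)) ℝ := fun s =>
    Matrix.of fun a b => h s (T.orderEmbOfFin hT a) (T.orderEmbOfFin hT b) with hN
  set N' : Matrix (Fin (k + 1)) (Fin (k + 1)) ℝ :=
    Matrix.of fun a b => h' t (T.orderEmbOfFin hT a) (T.orderEmbOfFin hT b) with hN'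
  have hfun : (fun s => pdet (k + 1) (h s) T T) = fun s => (N s).det :=
    funext fun s => pdet_of_card (h s) hT hT
  rw [hfun]
  have hder := hasDerivAt_det_general N N' t (fun a b => hd _ _ t)
  have hval : ∑ a : Fin (k + 1), ((N t).updateCol a (fun r => N' r a)).det
      = ∑ a : Fin (k + 1), ∑ r : Fin (k + 1),
        (-1 : ℝ) ^ ((r : ℕ) + (a : ℕ)) * h' t (T.orderEmbOfFin hT r) (T.orderEmbOfFin hT a) *
          pdet k (h t) (T.erase (T.orderEmbOfFin hT r)) (T.erase (T.orderEmbOfFin hT a)) := by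
    refine Finset.sum_congr rfl fun a _ => ?_
    rw [Matrix.det_succ_column _ a]
    refine Finset.sum_congr rfl fun r _ => ?_
    rw [Matrix.updateCol_self]
    congr 1
    have hsub : ((N t).updateCol a fun r => N' r a).submatrix r.succAbove a.succAbove
        = Matrix.of fun x y =>
            (h t) ((T.erase (T.orderEmbOfFin hT r)).orderEmbOfFin (card_erase_emb T hT r) x)
              ((T.erase (T.orderEmbOfFin hT a)).orderEmbOfFin (card_erase_emb T hT a) y) := by
      ext x y
      rw [Matrix.submatrix_apply, Matrix.updateCol_ne (Fin.succAbove_ne a y)]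
      simp only [Matrix.of_apply]
      rw [orderEmbOfFin_erase, orderEmbOfFin_erase]
      rfl
    rw [hsub, pdet_of_card (h t) (card_erase_emb T hT r) (card_erase_emb T hT a)]
  rw [← hval]
  exact hder

end DForm

namespace DForm

open Finset

variable {n : ℕ}

lemma dinner_ofMatrix (ω : DForm n) (m : Matrix (Fin n) (Fin n) ℝ) :
    dinner ω (ofMatrix m) = ∑ i : Fin n, ∑ j : Fin n, ω {i} {j} * m i j := by
  have hF : dinner ω (ofMatrix m) = ∑ p ∈ (Finset.univ ×ˢ Finset.univ :
      Finset (Finset (Fin n) × Finset (Fin n))), ω p.1 p.2 * ofMatrix m p.1 p.2 := by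
    rw [dinner, Finset.sum_product]
  rw [hF, ← Finset.sum_product']
  set F : Finset (Fin n) × Finset (Fin n) → ℝ := fun p => ω p.1 p.2 * ofMatrix m p.1 p.2
    with hFdef
  set e : Fin n × Fin n → Finset (Fin n) × Finset (Fin n) := fun p => ({p.1}, {p.2}) with he
  have hinj : ∀ p ∈ (Finset.univ ×ˢ Finset.univ : Finset (Fin n × Fin n)),
      ∀ q ∈ (Finset.univ ×ˢ Finset.univ : Finset (Fin n × Fin n)), e p = e q → p = q := by
    intro p _ q _ hpq
    rw [he] at hpq
    have h1 := congrArg Prod.fst hpq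
    have h2 := congrArg Prod.snd hpq
    simp only at h1 h2
    exact Prod.ext (Finset.singleton_inj.1 h1) (Finset.singleton_inj.1 h2)
  have hsub : Finset.image e (Finset.univ ×ˢ Finset.univ) ⊆
      (Finset.univ ×ˢ Finset.univ : Finset (Finset (Fin n) × Finset (Fin n))) := by
    intro p _
    exact Finset.mem_product.2 ⟨Finset.mem_univ _, Finset.mem_univ _⟩
  have hvan : ∀ p ∈ (Finset.univ ×ˢ Finset.univ :
      Finset (Finset (Fin n) × Finset (Fin n))),
      p ∉ Finset.image e (Finset.univ ×ˢ Finset.univ) → F p = 0 := by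
    intro p _ hnp
    by_contra h0
    have hne : ofMatrix m p.1 p.2 ≠ 0 := by
      intro hz
      apply h0
      rw [hFdef]
      dsimp only
      rw [hz, mul_zero]
    obtain ⟨⟨i, hA⟩, ⟨j, hB⟩⟩ := ofMatrix_support hne
    apply hnp
    refine Finset.mem_image.2 ⟨(i, j), Finset.mem_product.2 ⟨Finset.mem_univ _,
      Finset.mem_univ _⟩, ?_⟩
    rw [he]
    dsimp only
    rw [← hA, ← hB]
  calc ∑ p ∈ (Finset.univ ×ˢ Finset.univ : Finset (Finset (Fin n) × Finset (Fin n))), F p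
      = ∑ p ∈ Finset.image e (Finset.univ ×ˢ Finset.univ), F p :=
        (Finset.sum_subset hsub hvan).symm
    _ = ∑ x ∈ Finset.univ ×ˢ Finset.univ, F (e x) := Finset.sum_image hinj
    _ = ∑ x ∈ (Finset.univ ×ˢ Finset.univ : Finset (Fin n × Fin n)),
          ω {x.1} {x.2} * m x.1 x.2 := by
        refine Finset.sum_congr rfl fun x _ => ?_
        rw [hFdef, he]
        dsimp only
        rw [ofMatrix_singleton]

lemma sum_sum_ite_mem (T : Finset (Fin n)) (G : Fin n → Fin n → ℝ) (c : Prop) [Decidable c]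
    (hc : c) :
    ∑ i : Fin n, ∑ j : Fin n, (if c ∧ i ∈ T ∧ j ∈ T then G i j else 0)
      = ∑ i ∈ T, ∑ j ∈ T, G i j := by
  have h1 : ∀ i : Fin n, ∑ j : Fin n, (if c ∧ i ∈ T ∧ j ∈ T then G i j else 0)
      = if i ∈ T then ∑ j ∈ T, G i j else 0 := by
    intro i
    by_cases hi : i ∈ T
    · rw [if_pos hi]
      calc ∑ j : Fin n, (if c ∧ i ∈ T ∧ j ∈ T then G i j else 0)
          = ∑ j : Fin n, (if j ∈ T then G i j else 0) := by
            refine Finset.sum_congr rfl fun j _ => ?_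
            by_cases hj : j ∈ T
            · rw [if_pos hj, if_pos ⟨hc, hi, hj⟩]
            · rw [if_neg hj, if_neg (fun hx => hj hx.2.2)]
        _ = ∑ j ∈ T, G i j := by rw [Finset.sum_ite_mem, Finset.univ_inter]
    · rw [if_neg hi]
      apply Finset.sum_eq_zero
      intro j _
      rw [if_neg (fun hx => hi hx.2.1)]
  rw [Finset.sum_congr rfl fun i _ => h1 i, Finset.sum_ite_mem, Finset.univ_inter]

lemma hasDerivAt_sk (h h' : ℝ → Matrix (Fin n) (Fin n) ℝ)
    (hd : ∀ (i j : Fin n) (t : ℝ), HasDerivAt (fun s => h s i j) (h' t i j) t)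
    (k : ℕ) (hk1 : 1 ≤ k) (t : ℝ) :
    HasDerivAt (fun s => ∑ T : Finset (Fin n), if T.card = k then pdet k (h s) T T else 0)
      (∑ i : Fin n, ∑ j : Fin n, cofT (h t) k i j * h' t i j) t := by
  obtain ⟨m, rfl⟩ : ∃ m, k = m + 1 := ⟨k - 1, by omega⟩
  have hterm : ∀ T : Finset (Fin n), HasDerivAt
      (fun s => if T.card = m + 1 then pdet (m + 1) (h s) T T else 0)
      (if hT : T.card = m + 1 then
        ∑ a : Fin (m + 1), ∑ r : Fin (m + 1),
          (-1 : ℝ) ^ ((r : ℕ) + (a : ℕ)) * h' t (T.orderEmbOfFin hT r) (T.orderEmbOfFin hT a) *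
            pdet m (h t) (T.erase (T.orderEmbOfFin hT r)) (T.erase (T.orderEmbOfFin hT a))
      else 0) t := by
    intro T
    by_cases hT : T.card = m + 1
    · rw [dif_pos hT]
      have hfn : (fun s => if T.card = m + 1 then pdet (m + 1) (h s) T T else 0)
          = fun s => pdet (m + 1) (h s) T T := funext fun s => if_pos hT
      rw [hfn]
      exact hasDerivAt_pdet h h' hd t hT
    · rw [dif_neg hT]
      have hfn : (fun s => if T.card = m + 1 then pdet (m + 1) (h s) T T else 0)
          = fun _ => (0 : ℝ) := funext fun s => if_neg hT
      rw [hfn]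
      exact hasDerivAt_const t 0
  have hder := HasDerivAt.fun_sum (u := Finset.univ) (fun T (_ : T ∈ Finset.univ) => hterm T)
  have hval : (∑ T : Finset (Fin n), if hT : T.card = m + 1 then
        ∑ a : Fin (m + 1), ∑ r : Fin (m + 1),
          (-1 : ℝ) ^ ((r : ℕ) + (a : ℕ)) * h' t (T.orderEmbOfFin hT r) (T.orderEmbOfFin hT a) *
            pdet m (h t) (T.erase (T.orderEmbOfFin hT r)) (T.erase (T.orderEmbOfFin hT a))
      else 0)
      = ∑ i : Fin n, ∑ j : Fin n, cofT (h t) (m + 1) i j * h' t i j := by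
    have hstep : ∀ T : Finset (Fin n), (if hT : T.card = m + 1 then
        ∑ a : Fin (m + 1), ∑ r : Fin (m + 1),
          (-1 : ℝ) ^ ((r : ℕ) + (a : ℕ)) * h' t (T.orderEmbOfFin hT r) (T.orderEmbOfFin hT a) *
            pdet m (h t) (T.erase (T.orderEmbOfFin hT r)) (T.erase (T.orderEmbOfFin hT a))
      else 0)
        = ∑ i : Fin n, ∑ j : Fin n, (if T.card = m + 1 ∧ i ∈ T ∧ j ∈ T then
            (shuffleSign {i} (T.erase i) * shuffleSign {j} (T.erase j)
              * pdet m (h t) (T.erase i) (T.erase j)) * h' t i j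
          else 0) := by
      intro T
      by_cases hT : T.card = m + 1
      · rw [dif_pos hT]
        have hinner : ∀ a : Fin (m + 1), ∑ r : Fin (m + 1),
            (-1 : ℝ) ^ ((r : ℕ) + (a : ℕ)) * h' t (T.orderEmbOfFin hT r) (T.orderEmbOfFin hT a) *
              pdet m (h t) (T.erase (T.orderEmbOfFin hT r)) (T.erase (T.orderEmbOfFin hT a))
            = ∑ i ∈ T, (shuffleSign {i} (T.erase i)
                * shuffleSign {T.orderEmbOfFin hT a} (T.erase (T.orderEmbOfFin hT a))
                * pdet m (h t) (T.erase i) (T.erase (T.orderEmbOfFin hT a)))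
                * h' t i (T.orderEmbOfFin hT a) := by
          intro a
          rw [sum_emb hT (fun i => (shuffleSign {i} (T.erase i)
            * shuffleSign {T.orderEmbOfFin hT a} (T.erase (T.orderEmbOfFin hT a))
            * pdet m (h t) (T.erase i) (T.erase (T.orderEmbOfFin hT a)))
            * h' t i (T.orderEmbOfFin hT a))]
          refine Finset.sum_congr rfl fun r _ => ?_
          rw [Finset.erase_eq, Finset.erase_eq, shuffleSign_emb, shuffleSign_emb, pow_add,
            ← Finset.erase_eq, ← Finset.erase_eq]
          ring
        rw [Finset.sum_congr rfl fun a _ => hinner a]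
        rw [← sum_emb hT (fun j => ∑ i ∈ T, (shuffleSign {i} (T.erase i)
          * shuffleSign {j} (T.erase j) * pdet m (h t) (T.erase i) (T.erase j)) * h' t i j)]
        rw [Finset.sum_comm]
        exact (sum_sum_ite_mem T (fun i j => (shuffleSign {i} (T.erase i)
          * shuffleSign {j} (T.erase j) * pdet m (h t) (T.erase i) (T.erase j)) * h' t i j)
          (T.card = m + 1) hT).symm
      · rw [dif_neg hT]
        symm
        apply Finset.sum_eq_zero; intro i _
        apply Finset.sum_eq_zero; intro j _
        rw [if_neg (fun hx => hT hx.1)]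
    rw [Finset.sum_congr rfl fun T _ => hstep T, Finset.sum_comm]
    refine Finset.sum_congr rfl fun i _ => ?_
    rw [Finset.sum_comm]
    refine Finset.sum_congr rfl fun j _ => ?_
    rw [cofT, Finset.sum_mul]
    refine Finset.sum_congr rfl fun T _ => ?_
    rw [ite_mul, zero_mul]
    rfl
  rw [← hval]
  exact hder

end DForm


open DForm in
/-- Jacobi's formula: `(d/dt) s_k(h(t)) = ⟨t_{k-1}(h(t)), h'(t)⟩`; in particular for `k = n`,
`(d/dt) det(h(t)) = ⟨t_{n-1}(h(t)), h'(t)⟩`. -/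
theorem statement10 (n : ℕ) (h h' : ℝ → Matrix (Fin n) (Fin n) ℝ)
    (hd : ∀ (i j : Fin n) (t : ℝ), HasDerivAt (fun s => h s i j) (h' t i j) t) :
    (∀ (k : ℕ) (t : ℝ), 1 ≤ k → k ≤ n →
      HasDerivAt (fun s => sInv (h s) k)
        (dinner (tInv (h t) (k - 1)) (ofMatrix (h' t))) t) ∧
    (∀ t : ℝ, 1 ≤ n →
      HasDerivAt (fun s => (h s).det)
        (dinner (tInv (h t) (n - 1)) (ofMatrix (h' t))) t) := by
  have part1 : ∀ (k : ℕ) (t : ℝ), 1 ≤ k → k ≤ n →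
      HasDerivAt (fun s => sInv (h s) k)
        (dinner (tInv (h t) (k - 1)) (ofMatrix (h' t))) t := by
    intro k t hk1 hkn
    have hfun : (fun s => sInv (h s) k)
        = fun s => ∑ T : Finset (Fin n), if T.card = k then pdet k (h s) T T else 0 :=
      funext fun s => sInv_eq (h s) k hkn
    have hval : dinner (tInv (h t) (k - 1)) (ofMatrix (h' t))
        = ∑ i : Fin n, ∑ j : Fin n, cofT (h t) k i j * h' t i j := by
      rw [dinner_ofMatrix]
      exact Finset.sum_congr rfl fun i _ => Finset.sum_congr rfl fun j _ => by
        rw [tInv_single (h t) k hk1 hkn]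
    rw [hfun, hval]
    exact hasDerivAt_sk h h' hd k hk1 t
  refine ⟨part1, fun t hn => ?_⟩
  have hfun : (fun s => (h s).det) = fun s => sInv (h s) n := funext fun s => by
    rw [sInv, Matrix.det_eq_sign_charpoly_coeff, Fintype.card_fin, Nat.sub_self]
  rw [hfun]
  exact part1 n t hn le_rfl
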